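/- Let $b, m > 0$ and $h > h^\#$, and let $g_h(t) = \frac{m^2}{t} + \frac{h^{2b+1} - (h-\min\{h,t\})^{2b+1}}{2b+1}$ with $t_h < T_h$ the two solutions of $t^2(h-t)^{2b} = m^2$ in $(0,h)$. Then $g_h$ is strictly decreasing on $(0, t_h)$, strictly increasing on $(t_h, T_h)$, and strictly decreasing on $(T_h, \infty)$. -/

import Mathlib

open Real Set

private lemma f_hasDeriv (b m h s : ℝ) (hb : 0 < b) (hs : s ≠ 0) :
    HasDerivAt (fun s : ℝ => m^2 / s + (h ^ (2*b+1) - (h - s) ^ (2*b+1)) / (2*b+1))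
      (-(m^2 / s^2) + (h - s) ^ (2*b)) s := by
  have h1 : HasDerivAt (fun s : ℝ => m^2 / s) ((0 * s - m^2 * 1) / s^2) s :=
    (hasDerivAt_const s (m^2)).div (hasDerivAt_id s) hs
  have h2 : HasDerivAt (fun s : ℝ => (h - s) ^ (2*b+1))
      ((0 - 1) * (2*b+1) * (h - s) ^ (2*b+1-1)) s :=
    (((hasDerivAt_const s h).sub (hasDerivAt_id s)).rpow_const
      (Or.inr (show (1:ℝ) ≤ 2*b+1 by linarith)))
  have h3 := (hasDerivAt_const s (h ^ (2*b+1))).sub h2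
  have h4 := h1.add (h3.div_const (2*b+1))
  refine h4.congr_deriv ?_
  have hrw : 2*b+1-1 = 2*b := by ring
  rw [hrw]
  have hne : (2*b+1) ≠ 0 := by linarith
  field_simp
  ring

private lemma phi_hasDeriv (b h s : ℝ) (hs : 0 < h - s) :
    HasDerivAt (fun s : ℝ => s^2 * (h - s) ^ (2*b))
      (2*s*((h - s) ^ (2*b-1))*(h - (b+1)*s)) s := by
  have h1 : HasDerivAt (fun s : ℝ => s^2) (2*s) s := by
    simpa using hasDerivAt_pow 2 s
  have h2 : HasDerivAt (fun s : ℝ => (h - s) ^ (2*b))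
      ((0 - 1) * (2*b) * (h - s) ^ (2*b-1)) s :=
    (((hasDerivAt_const s h).sub (hasDerivAt_id s)).rpow_const (Or.inl (ne_of_gt hs)))
  have h3 := h1.mul h2
  refine h3.congr_deriv ?_
  have key : (h - s) ^ (2*b-1) = (h - s) ^ (2*b) / (h - s) := by
    rw [Real.rpow_sub hs, Real.rpow_one]
  rw [key]
  field_simp
  ring

/-- For h > h^#, g_h is strictly decreasing on (0, t_h), strictly increasing on
(t_h, T_h), and strictly decreasing on (T_h, ∞). -/
theorem g_monotonicity (b m h t T : ℝ) (hb : 0 < b) (hm : 0 < m)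
    (hh : (b+1) / b ^ (b/(b+1)) * m ^ (1/(b+1)) < h)
    (ht : 0 < t) (ht' : t < h/(b+1)) (he : t^2 * (h - t) ^ (2*b) = m^2)
    (hT : h/(b+1) < T) (hT' : T < h) (he' : T^2 * (h - T) ^ (2*b) = m^2) :
    StrictAntiOn (fun s : ℝ =>
        m^2 / s + (h ^ (2*b+1) - (h - min h s) ^ (2*b+1)) / (2*b+1))
      (Set.Ioo 0 t) ∧
    StrictMonoOn (fun s : ℝ =>
        m^2 / s + (h ^ (2*b+1) - (h - min h s) ^ (2*b+1)) / (2*b+1))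
      (Set.Ioo t T) ∧
    StrictAntiOn (fun s : ℝ =>
        m^2 / s + (h ^ (2*b+1) - (h - min h s) ^ (2*b+1)) / (2*b+1))
      (Set.Ioi T) := by
  have hb1 : (0:ℝ) < b + 1 := by linarith
  have hmid0 : 0 < h / (b+1) := ht.trans ht'
  have hh0 : 0 < h := by
    rcases div_pos_iff.mp hmid0 with ⟨h1, _⟩ | ⟨_, h2⟩
    · exact h1
    · linarith
  have hmid : h / (b+1) < h := div_lt_self hh0 (by linarith)
  have hT0 : 0 < T := hmid0.trans hT
  set φ : ℝ → ℝ := fun s => s^2 * (h - s) ^ (2*b) with hφ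
  have hφc : Continuous φ := by
    apply (continuous_pow 2).mul
    exact (continuous_const.sub continuous_id).rpow_const fun x => Or.inr (by positivity)
  -- φ strictly increasing on [0, h/(b+1)]
  have phiMono : StrictMonoOn φ (Icc 0 (h/(b+1))) := by
    apply strictMonoOn_of_deriv_pos (convex_Icc _ _) hφc.continuousOn
    intro s hs
    rw [interior_Icc] at hs
    have hsh : 0 < h - s := by linarith [hs.2, hmid]
    rw [(phi_hasDeriv b h s hsh).deriv]
    have h5 : 0 < h - (b+1)*s := by
      have := (lt_div_iff₀ hb1).mp hs.2
      linarith
    exact mul_pos (mul_pos (by linarith [hs.1]) (Real.rpow_pos_of_pos hsh _)) h5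
  -- φ strictly decreasing on [h/(b+1), h]
  have phiAnti : StrictAntiOn φ (Icc (h/(b+1)) h) := by
    apply strictAntiOn_of_deriv_neg (convex_Icc _ _) hφc.continuousOn
    intro s hs
    rw [interior_Icc] at hs
    have hsh : 0 < h - s := by linarith [hs.2]
    rw [(phi_hasDeriv b h s hsh).deriv]
    have h5 : h - (b+1)*s < 0 := by
      have := (div_lt_iff₀ hb1).mp hs.1
      linarith
    exact mul_neg_of_pos_of_neg
      (mul_pos (by linarith [hmid0.trans hs.1]) (Real.rpow_pos_of_pos hsh _)) h5
  set f : ℝ → ℝ := fun s => m^2 / s + (h ^ (2*b+1) - (h - s) ^ (2*b+1)) / (2*b+1) with hf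
  have hderivf : ∀ s : ℝ, 0 < s → deriv f s = -(m^2 / s^2) + (h - s) ^ (2*b) :=
    fun s hs => (f_hasDeriv b m h s hb (ne_of_gt hs)).deriv
  have hcontf : ∀ a c : ℝ, 0 < a → ContinuousOn f (Icc a c) := by
    intro a c ha
    intro x hx
    exact (f_hasDeriv b m h x hb (ne_of_gt (ha.trans_le hx.1))).continuousAt.continuousWithinAt
  have hcontf' : ContinuousOn f (Ioc 0 t) := fun x hx =>
    (f_hasDeriv b m h x hb (ne_of_gt hx.1)).continuousAt.continuousWithinAt
  -- translate φ comparisons into deriv sign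
  have dneg : ∀ s : ℝ, 0 < s → φ s < m^2 → deriv f s < 0 := by
    intro s hs hφs
    rw [hderivf s hs]
    have : (h - s) ^ (2*b) < m^2 / s^2 := by
      rw [lt_div_iff₀ (by positivity)]
      have : s^2 * (h - s) ^ (2*b) < m^2 := hφs
      nlinarith
    linarith
  have dpos : ∀ s : ℝ, 0 < s → m^2 < φ s → 0 < deriv f s := by
    intro s hs hφs
    rw [hderivf s hs]
    have : m^2 / s^2 < (h - s) ^ (2*b) := by
      rw [div_lt_iff₀ (by positivity)]
      have : m^2 < s^2 * (h - s) ^ (2*b) := hφs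
      nlinarith
    linarith
  have htmem : t ∈ Icc 0 (h/(b+1)) := ⟨ht.le, ht'.le⟩
  have hTmem : T ∈ Icc (h/(b+1)) h := ⟨hT.le, hT'.le⟩
  -- f strictly decreasing on (0, t]
  have A : StrictAntiOn f (Ioc 0 t) := by
    apply strictAntiOn_of_deriv_neg (convex_Ioc _ _) hcontf'
    intro s hs
    rw [interior_Ioc] at hs
    apply dneg s hs.1
    have := phiMono ⟨hs.1.le, by linarith [hs.2]⟩ htmem hs.2
    rw [hφ] at this ⊢
    simp only at this ⊢
    linarith [he, this]
  -- f strictly increasing on [t, T]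
  have B : StrictMonoOn f (Icc t T) := by
    apply strictMonoOn_of_deriv_pos (convex_Icc _ _) (hcontf t T ht)
    intro s hs
    rw [interior_Icc] at hs
    apply dpos s (ht.trans hs.1)
    rcases le_or_gt s (h/(b+1)) with hsle | hsgt
    · have := phiMono htmem ⟨(ht.trans hs.1).le, hsle⟩ hs.1
      simp only [hφ] at this ⊢
      linarith [he]
    · have := phiAnti ⟨hsgt.le, (hs.2.trans hT').le⟩ hTmem hs.2
      simp only [hφ] at this ⊢
      linarith [he']
  -- f strictly decreasing on [T, h]
  have C1 : StrictAntiOn f (Icc T h) := by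
    apply strictAntiOn_of_deriv_neg (convex_Icc _ _) (hcontf T h hT0)
    intro s hs
    rw [interior_Icc] at hs
    apply dneg s (hT0.trans hs.1)
    have := phiAnti hTmem ⟨(hT.trans hs.1).le, hs.2.le⟩ hs.1
    simp only [hφ] at this ⊢
    linarith [he']
  have hGf : ∀ s : ℝ, s ≤ h →
      m^2 / s + (h ^ (2*b+1) - (h - min h s) ^ (2*b+1)) / (2*b+1) = f s := by
    intro s hs
    rw [min_eq_right hs]
  refine ⟨?_, ?_, ?_⟩
  · intro x hx y hy hxy
    have hx' : x ∈ Ioc 0 t := ⟨hx.1, hx.2.le⟩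
    have hy' : y ∈ Ioc 0 t := ⟨hy.1, hy.2.le⟩
    show m^2 / y + (h ^ (2*b+1) - (h - min h y) ^ (2*b+1)) / (2*b+1) <
      m^2 / x + (h ^ (2*b+1) - (h - min h x) ^ (2*b+1)) / (2*b+1)
    rw [hGf x (by linarith [hx.2]), hGf y (by linarith [hy.2])]
    exact A hx' hy' hxy
  · intro x hx y hy hxy
    have hx' : x ∈ Icc t T := ⟨hx.1.le, hx.2.le⟩
    have hy' : y ∈ Icc t T := ⟨hy.1.le, hy.2.le⟩
    show m^2 / x + (h ^ (2*b+1) - (h - min h x) ^ (2*b+1)) / (2*b+1) <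
      m^2 / y + (h ^ (2*b+1) - (h - min h y) ^ (2*b+1)) / (2*b+1)
    rw [hGf x (by linarith [hx.2]), hGf y (by linarith [hy.2])]
    exact B hx' hy' hxy
  · -- decreasing on (T, ∞): glue (T, h] and [h, ∞)
    have hC2 : ∀ u v : ℝ, h ≤ u → u < v →
        m^2 / v + (h ^ (2*b+1) - (h - min h v) ^ (2*b+1)) / (2*b+1) <
        m^2 / u + (h ^ (2*b+1) - (h - min h u) ^ (2*b+1)) / (2*b+1) := by
      intro u v hu huv
      have hu0 : 0 < u := hh0.trans_le hu
      rw [min_eq_left (hu.trans huv.le), min_eq_left hu]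
      have : m^2 / v < m^2 / u := div_lt_div_of_pos_left (by positivity) hu0 huv
      linarith
    have hC1g : ∀ u v : ℝ, u ∈ Ioc T h → v ∈ Ioc T h → u < v →
        m^2 / v + (h ^ (2*b+1) - (h - min h v) ^ (2*b+1)) / (2*b+1) <
        m^2 / u + (h ^ (2*b+1) - (h - min h u) ^ (2*b+1)) / (2*b+1) := by
      intro u v hu hv huv
      rw [hGf u hu.2, hGf v hv.2]
      exact C1 ⟨hu.1.le, hu.2⟩ ⟨hv.1.le, hv.2⟩ huv
    intro x hx y hy hxy
    simp only [mem_Ioi] at hx hy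
    show m^2 / y + (h ^ (2*b+1) - (h - min h y) ^ (2*b+1)) / (2*b+1) <
      m^2 / x + (h ^ (2*b+1) - (h - min h x) ^ (2*b+1)) / (2*b+1)
    rcases le_or_gt y h with hyh | hyh
    · exact hC1g x y ⟨hx, by linarith⟩ ⟨hy, hyh⟩ hxy
    · rcases le_or_gt h x with hhx | hhx
      · exact hC2 x y hhx hxy
      · exact (hC2 h y le_rfl hyh).trans (hC1g x h ⟨hx, hhx.le⟩ ⟨hT', le_rfl⟩ hhx)
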